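/- arXiv:2010.04912 — 2 statements merged into one kernel-verified Lean document; each statement's English description precedes it below -/
import Mathlib

section
/- Let n, m ≥ 1, d ≥ 2, c ≥ 0, b ≥ 0, and let x_1, …, x_m ∈ ℝⁿ. For any integer e ≥ 1, let N^{e} denote the class of functions f : ℝⁿ → ℝ of the form f(x) = ⟨w, h_{e−1}(x)⟩ + β, where h_0(x) = x, h_l(x) = ReLU(W_l h_{l−1}(x) + B_l) for l = 1, …, e−1, the W_l are real n×n matrices with ‖W_l‖_{2,∞} ≤ c, w ∈ ℝⁿ with ‖w‖₂ ≤ c, B_l ∈ ℝⁿ with ‖B_l‖_∞ ≤ b, and β ∈ ℝ with |β| ≤ b. Then the empirical Rademacher complexities on x_1, …, x_m satisfy R(N^{d}) ≤ 2·c·√n · R(N^{d−1}) + b. -/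
open Finset

/-- Entrywise ReLU on vectors. -/
noncomputable def relu {p : ℕ} (v : Fin p → ℝ) : Fin p → ℝ := fun i => max (v i) 0

/-- The hidden layers of a fully connected ReLU network:
`netHidden W B 0 x = x` and `netHidden W B l x = ReLU(W l (netHidden W B (l-1) x) + B l)`. -/
noncomputable def netHidden {n : ℕ} (W : ℕ → Matrix (Fin n) (Fin n) ℝ) (B : ℕ → Fin n → ℝ) :
    ℕ → (Fin n → ℝ) → Fin n → ℝ
  | 0 => fun x => x
  | l + 1 => fun x => relu ((W (l + 1)).mulVec (netHidden W B l x) + B (l + 1))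

/-- The class `N^{e,n}_{c,b}` of depth-`e` width-`n` ReLU networks `ℝⁿ → ℝ` whose weight
matrices have `L_{2,∞}` norm at most `c` (output weight vector of `ℓ₂` norm at most `c`) and
whose biases are bounded by `b` in `ℓ∞` norm. -/
noncomputable def NNclass (n e : ℕ) (c b : ℝ) : Set ((Fin n → ℝ) → ℝ) :=
  { f | ∃ (W : ℕ → Matrix (Fin n) (Fin n) ℝ) (B : ℕ → Fin n → ℝ) (w : Fin n → ℝ) (β : ℝ),
      (∀ l i, Real.sqrt (∑ j, W l i j ^ 2) ≤ c) ∧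
      (∀ l i, |B l i| ≤ b) ∧
      Real.sqrt (∑ j, w j ^ 2) ≤ c ∧ |β| ≤ b ∧
      ∀ x, f x = (∑ j, w j * netHidden W B (e - 1) x j) + β }

/-- The empirical Rademacher complexity of a class `K` of functions `ℝⁿ → ℝ` on the points
`x 1, …, x m`: the average over all sign vectors `s ∈ {−1,1}^m` of
`sup_{f ∈ K} (1/m) Σ_i s_i f(x_i)`. -/
noncomputable def rademacher {n m : ℕ} (x : Fin m → Fin n → ℝ)
    (K : Set ((Fin n → ℝ) → ℝ)) : ℝ :=
  (1 / 2 ^ m : ℝ) * ∑ s : Fin m → Bool,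
    ⨆ f : K, (1 / m : ℝ) * ∑ i, (if s i then (1 : ℝ) else -1) * (f : (Fin n → ℝ) → ℝ) (x i)

namespace LayerPeel

/-- The Rademacher sign attached to a boolean. -/
noncomputable def sg {m : ℕ} (s : Fin m → Bool) (i : Fin m) : ℝ := if s i then (1 : ℝ) else -1

lemma abs_sg {m : ℕ} (s : Fin m → Bool) (i : Fin m) : |sg s i| = 1 := by
  unfold sg; split <;> simp

lemma sg_mul_le {m : ℕ} (s : Fin m → Bool) (i : Fin m) {u v : ℝ} (h : |u| ≤ v) :
    sg s i * u ≤ v :=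
  (le_abs_self _).trans (by rw [abs_mul, abs_sg, one_mul]; exact h)

lemma sg_not {m : ℕ} (s : Fin m → Bool) (i : Fin m) :
    sg (fun i => !(s i)) i = - sg s i := by
  rcases Bool.dichotomy (s i) with h | h <;> simp [sg, h]

lemma abs_max_zero_le (a : ℝ) : |max a 0| ≤ |a| := by
  rcases le_total a 0 with h | h
  · simp [max_eq_right h]
  · simp [max_eq_left h, le_abs_self]

lemma entry_le {n : ℕ} {w : Fin n → ℝ} {c : ℝ} (h : Real.sqrt (∑ j, w j ^ 2) ≤ c) (k : Fin n) :
    |w k| ≤ c := by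
  have h1 : w k ^ 2 ≤ ∑ j, w j ^ 2 :=
    Finset.single_le_sum (f := fun j => w j ^ 2) (fun _ _ => sq_nonneg _) (Finset.mem_univ k)
  calc |w k| = Real.sqrt (w k ^ 2) := (Real.sqrt_sq_eq_abs _).symm
    _ ≤ Real.sqrt (∑ j, w j ^ 2) := Real.sqrt_le_sqrt h1
    _ ≤ c := h

/-- Recursive bound for the layers. -/
noncomputable def layerB (n : ℕ) (c b X : ℝ) : ℕ → ℝ
  | 0 => X
  | l + 1 => n * c * layerB n c b X l + b

lemma layerB_nonneg {n : ℕ} {c b X : ℝ} (hc : 0 ≤ c) (hb : 0 ≤ b) (hX : 0 ≤ X) :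
    ∀ l, 0 ≤ layerB n c b X l
  | 0 => hX
  | l + 1 => by
    have ih := layerB_nonneg (n := n) hc hb hX l
    have h1 : (0:ℝ) ≤ n * c * layerB n c b X l :=
      mul_nonneg (mul_nonneg (Nat.cast_nonneg n) hc) ih
    simpa [layerB] using add_nonneg h1 hb

lemma netHidden_bound {n : ℕ} {W : ℕ → Matrix (Fin n) (Fin n) ℝ} {B : ℕ → Fin n → ℝ}
    {c b X : ℝ} (hc : 0 ≤ c) (hb : 0 ≤ b) (hX : 0 ≤ X)
    (hW : ∀ l i, Real.sqrt (∑ j, W l i j ^ 2) ≤ c) (hB : ∀ l i, |B l i| ≤ b)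
    {x : Fin n → ℝ} (hx : ∀ j, |x j| ≤ X) :
    ∀ l j, |netHidden W B l x j| ≤ layerB n c b X l
  | 0, j => hx j
  | l + 1, j => by
    have ih := fun k => netHidden_bound hc hb hX hW hB hx l k
    have hL := layerB_nonneg (n := n) hc hb hX l
    calc |netHidden W B (l+1) x j|
        ≤ |(∑ k, W (l+1) j k * netHidden W B l x k) + B (l+1) j| := by
          simpa [netHidden, relu, Matrix.mulVec, dotProduct] using
            abs_max_zero_le ((∑ k, W (l+1) j k * netHidden W B l x k) + B (l+1) j)
      _ ≤ |∑ k, W (l+1) j k * netHidden W B l x k| + |B (l+1) j| := abs_add_le _ _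
      _ ≤ (∑ k, |W (l+1) j k * netHidden W B l x k|) + b :=
          add_le_add (Finset.abs_sum_le_sum_abs _ _) (hB _ _)
      _ ≤ (∑ _k : Fin n, c * layerB n c b X l) + b := by
          gcongr with k _
          rw [abs_mul]
          exact mul_le_mul (entry_le (hW (l+1) j) k) (ih k) (abs_nonneg _) hc
      _ = layerB n c b X (l + 1) := by
          simp [layerB, Finset.sum_const, mul_assoc]
    termination_by l => l

lemma eval_bound {n e : ℕ} {c b : ℝ} (hc : 0 ≤ c) (hb : 0 ≤ b) {f : (Fin n → ℝ) → ℝ}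
    (hf : f ∈ NNclass n e c b) {x : Fin n → ℝ} {X : ℝ} (hX : 0 ≤ X) (hx : ∀ j, |x j| ≤ X) :
    |f x| ≤ n * c * layerB n c b X (e - 1) + b := by
  obtain ⟨W, B, w, β, hW, hB, hw, hβ, hfx⟩ := hf
  have hL := layerB_nonneg (n := n) hc hb hX (e - 1)
  calc |f x| = |(∑ j, w j * netHidden W B (e - 1) x j) + β| := by rw [hfx x]
    _ ≤ |∑ j, w j * netHidden W B (e - 1) x j| + |β| := abs_add_le _ _
    _ ≤ (∑ j, |w j * netHidden W B (e - 1) x j|) + b :=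
        add_le_add (Finset.abs_sum_le_sum_abs _ _) hβ
    _ ≤ (∑ _j : Fin n, c * layerB n c b X (e - 1)) + b := by
        gcongr with j _
        rw [abs_mul]
        exact mul_le_mul (entry_le hw j) (netHidden_bound hc hb hX hW hB hx (e-1) j)
          (abs_nonneg _) hc
    _ = n * c * layerB n c b X (e - 1) + b := by
        simp [Finset.sum_const, mul_assoc]

lemma zero_mem (n e : ℕ) {c b : ℝ} (hc : 0 ≤ c) (hb : 0 ≤ b) :
    (fun _ => (0:ℝ)) ∈ NNclass n e c b := by
  refine ⟨fun _ => 0, fun _ => 0, fun _ => 0, 0, ?_, ?_, ?_, ?_, ?_⟩ <;>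
    simp [hc, hb]

lemma ciSup_add_ciSup_le {ι : Sort*} [Nonempty ι] {A B : ι → ℝ} {C : ℝ}
    (h : ∀ t t', A t + B t' ≤ C) : (⨆ t, A t) + (⨆ t, B t) ≤ C := by
  have h1 : ∀ t, A t ≤ C - ⨆ t', B t' := by
    intro t
    have h2 : (⨆ t', B t') ≤ C - A t := ciSup_le fun t' => by linarith [h t t']
    linarith
  have := ciSup_le h1
  linarith

lemma sg_flip {m : ℕ} (s : Fin m → Bool) (j : Fin m) :
    sg (Function.update s j (!s j)) j = - sg s j := by
  simp only [sg, Function.update_self]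
  cases s j <;> simp

lemma sg_flip_ne {m : ℕ} (s : Fin m → Bool) (j i : Fin m) (h : i ≠ j) :
    sg (Function.update s j (!s j)) i = sg s i := by
  simp [sg, Function.update_of_ne h]

/-- The contraction lemma for ReLU (Lipschitz constant 1):
`Σ_s sup_t Σ_i ε_i ReLU(F t i) ≤ Σ_s sup_t Σ_i ε_i (F t i)` for a uniformly bounded family. -/
lemma contraction {m : ℕ} {ι : Type*} [Nonempty ι] (F : ι → Fin m → ℝ) (M : ℝ)
    (hM : ∀ t i, |F t i| ≤ M) :
    ∑ s : Fin m → Bool, ⨆ t, ∑ i, sg s i * max (F t i) 0 ≤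
      ∑ s : Fin m → Bool, ⨆ t, ∑ i, sg s i * F t i := by
  classical
  set G : Finset (Fin m) → (Fin m → Bool) → ℝ := fun I s =>
    ⨆ t, ∑ i, sg s i * (if i ∈ I then max (F t i) 0 else F t i) with hG
  have bdd : ∀ (I : Finset (Fin m)) (s : Fin m → Bool),
      BddAbove (Set.range fun t => ∑ i, sg s i * (if i ∈ I then max (F t i) 0 else F t i)) := by
    intro I s
    refine ⟨(m : ℝ) * M, ?_⟩
    rintro _ ⟨t, rfl⟩
    calc (∑ i, sg s i * (if i ∈ I then max (F t i) 0 else F t i))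
        ≤ ∑ _i : Fin m, M := by
          refine Finset.sum_le_sum fun i _ => sg_mul_le s i ?_
          split
          · exact (abs_max_zero_le _).trans (hM t i)
          · exact hM t i
      _ = (m : ℝ) * M := by simp [Finset.sum_const]
  have step : ∀ (j : Fin m) (I : Finset (Fin m)), j ∉ I →
      ∑ s : Fin m → Bool, G (insert j I) s ≤ ∑ s : Fin m → Bool, G I s := by
    intro j I hjI
    set σ : (Fin m → Bool) → (Fin m → Bool) := fun s => Function.update s j (!s j) with hσdef
    have hσ : Function.Involutive σ := by
      intro s
      funext i
      by_cases h : i = j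
      · subst h; simp [σ, Function.update_self]
      · simp [σ, Function.update_of_ne h]
    have hsum : ∀ (I' : Finset (Fin m)), ∑ s, G I' (σ s) = ∑ s, G I' s := fun I' =>
      Equiv.sum_comp hσ.toPerm (G I')
    have key : ∀ s : Fin m → Bool,
        G (insert j I) s + G (insert j I) (σ s) ≤ G I s + G I (σ s) := by
      intro s
      have hdec : ∀ (I' : Finset (Fin m)) (s' : Fin m → Bool) (t : ι),
          (∑ i, sg s' i * (if i ∈ I' then max (F t i) 0 else F t i)) =
          sg s' j * (if j ∈ I' then max (F t j) 0 else F t j) +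
            ∑ i ∈ univ.erase j, sg s' i * (if i ∈ I' then max (F t i) 0 else F t i) :=
        fun I' s' t => (Finset.add_sum_erase _ _ (mem_univ j)).symm
      set r : ι → ℝ := fun t =>
        ∑ i ∈ univ.erase j, sg s i * (if i ∈ I then max (F t i) 0 else F t i) with hr
      have herase : ∀ (I' : Finset (Fin m)) (s' : Fin m → Bool) (t : ι),
          (s' = s ∨ s' = σ s) → (I' = I ∨ I' = insert j I) →
          (∑ i ∈ univ.erase j, sg s' i * (if i ∈ I' then max (F t i) 0 else F t i)) = r t := by
        intro I' s' t hs' hI'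
        refine Finset.sum_congr rfl fun i hi => ?_
        have hij : i ≠ j := (Finset.mem_erase.mp hi).1
        have h1 : sg s' i = sg s i := by
          rcases hs' with h | h
          · rw [h]
          · rw [h]; exact sg_flip_ne s j i hij
        have h2 : (if i ∈ I' then max (F t i) 0 else F t i) =
            (if i ∈ I then max (F t i) 0 else F t i) := by
          rcases hI' with h | h
          · rw [h]
          · subst h; simp [Finset.mem_insert, hij]
        rw [h1, h2]
      have hσj : sg (σ s) j = - sg s j := sg_flip s j
      refine ciSup_add_ciSup_le fun t t' => ?_
      rw [hdec (insert j I) s t, hdec (insert j I) (σ s) t',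
        herase (insert j I) s t (Or.inl rfl) (Or.inr rfl),
        herase (insert j I) (σ s) t' (Or.inr rfl) (Or.inr rfl), hσj]
      simp only [Finset.mem_insert, true_or, if_true, if_pos]
      have habs : sg s j * (max (F t j) 0 - max (F t' j) 0) ≤ |F t j - F t' j| := by
        have h1 : |max (F t j) 0 - max (F t' j) 0| ≤ |F t j - F t' j| :=
          abs_max_sub_max_le_abs _ _ _
        calc sg s j * (max (F t j) 0 - max (F t' j) 0)
            ≤ |sg s j * (max (F t j) 0 - max (F t' j) 0)| := le_abs_self _
          _ = |max (F t j) 0 - max (F t' j) 0| := by rw [abs_mul, abs_sg, one_mul]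
          _ ≤ |F t j - F t' j| := h1
      have habs2 : |F t j - F t' j| = max (sg s j * (F t j - F t' j))
          (-(sg s j * (F t j - F t' j))) := by
        rw [← abs_eq_max_neg, abs_mul, abs_sg, one_mul]
      have hLt : (fun u => ∑ i, sg s i * (if i ∈ I then max (F u i) 0 else F u i)) t ≤ G I s :=
        le_ciSup (bdd I s) t
      have hLt' : (fun u => ∑ i, sg (σ s) i * (if i ∈ I then max (F u i) 0 else F u i)) t' ≤
          G I (σ s) := le_ciSup (bdd I (σ s)) t'
      have hLs : (fun u => ∑ i, sg s i * (if i ∈ I then max (F u i) 0 else F u i)) t' ≤ G I s :=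
        le_ciSup (bdd I s) t'
      have hLs' : (fun u => ∑ i, sg (σ s) i * (if i ∈ I then max (F u i) 0 else F u i)) t ≤
          G I (σ s) := le_ciSup (bdd I (σ s)) t
      simp only [hdec I s t, hdec I s t', hdec I (σ s) t, hdec I (σ s) t', hσj,
        herase I s t (Or.inl rfl) (Or.inl rfl), herase I s t' (Or.inl rfl) (Or.inl rfl),
        herase I (σ s) t (Or.inr rfl) (Or.inl rfl),
        herase I (σ s) t' (Or.inr rfl) (Or.inl rfl), if_neg hjI] at hLt hLt' hLs hLs'
      rcases le_max_iff.mp (habs.trans habs2.le) with h | h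
      · nlinarith [hLt, hLt']
      · nlinarith [hLs, hLs']
    calc ∑ s : Fin m → Bool, G (insert j I) s
        = (∑ s : Fin m → Bool, (G (insert j I) s + G (insert j I) (σ s))) / 2 := by
          rw [Finset.sum_add_distrib, hsum]; ring
      _ ≤ (∑ s : Fin m → Bool, (G I s + G I (σ s))) / 2 := by
          have := Finset.sum_le_sum (fun s (_ : s ∈ (univ : Finset (Fin m → Bool))) => key s)
          linarith
      _ = ∑ s : Fin m → Bool, G I s := by rw [Finset.sum_add_distrib, hsum]; ring
  have main : ∀ I : Finset (Fin m), ∑ s : Fin m → Bool, G I s ≤ ∑ s : Fin m → Bool, G ∅ s := by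
    intro I
    induction I using Finset.induction_on with
    | empty => exact le_refl _
    | @insert j I hj ih => exact (step j I hj).trans ih
  have h1 : ∀ s, G univ s = ⨆ t, ∑ i, sg s i * max (F t i) 0 := by
    intro s; simp [hG]
  have h2 : ∀ s, G ∅ s = ⨆ t, ∑ i, sg s i * F t i := by
    intro s; simp [hG]
  calc ∑ s : Fin m → Bool, ⨆ t, ∑ i, sg s i * max (F t i) 0
      = ∑ s : Fin m → Bool, G univ s := by simp_rw [h1]
    _ ≤ ∑ s : Fin m → Bool, G ∅ s := main univ
    _ = ∑ s : Fin m → Bool, ⨆ t, ∑ i, sg s i * F t i := by simp_rw [h2]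

section Peel

variable {n m : ℕ} {c b : ℝ} (x : Fin m → Fin n → ℝ)

/-- `S x e s = sup_{f in depth-e class} Σ_i ε_i f(x_i)`. -/
noncomputable def S (e : ℕ) (s : Fin m → Bool) : ℝ :=
  ⨆ f : ↥(NNclass n e c b), ∑ i, sg s i * (f : (Fin n → ℝ) → ℝ) (x i)

/-- `A x e s = sup_{f in depth-e class} Σ_i ε_i ReLU(f(x_i))`. -/
noncomputable def A (e : ℕ) (s : Fin m → Bool) : ℝ :=
  ⨆ f : ↥(NNclass n e c b), ∑ i, sg s i * max ((f : (Fin n → ℝ) → ℝ) (x i)) 0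

/-- A uniform bound on the evaluations on the samples, over the class of depth `e`. -/
lemma exists_unif_bound (hc : 0 ≤ c) (hb : 0 ≤ b) (e : ℕ) :
    ∃ M : ℝ, ∀ f ∈ NNclass n e c b, ∀ i, |f (x i)| ≤ M := by
  set X : ℝ := ∑ i, ∑ j, |x i j| with hX
  have hX0 : 0 ≤ X := Finset.sum_nonneg fun i _ => Finset.sum_nonneg fun j _ => abs_nonneg _
  have hx : ∀ i j, |x i j| ≤ X := by
    intro i j
    calc |x i j| ≤ ∑ j', |x i j'| :=
          Finset.single_le_sum (f := fun j' => |x i j'|) (fun _ _ => abs_nonneg _)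
            (Finset.mem_univ j)
      _ ≤ X := Finset.single_le_sum (f := fun i' => ∑ j', |x i' j'|)
          (fun _ _ => Finset.sum_nonneg fun _ _ => abs_nonneg _) (Finset.mem_univ i)
  exact ⟨n * c * layerB n c b X (e - 1) + b,
    fun f hf i => eval_bound hc hb hf hX0 (hx i)⟩

lemma bddS (hc : 0 ≤ c) (hb : 0 ≤ b) (e : ℕ) (s : Fin m → Bool) :
    BddAbove (Set.range fun f : ↥(NNclass n e c b) =>
      ∑ i, sg s i * (f : (Fin n → ℝ) → ℝ) (x i)) := by
  obtain ⟨M, hM⟩ := exists_unif_bound (c := c) (b := b) x hc hb e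
  refine ⟨(m : ℝ) * M, ?_⟩
  rintro _ ⟨f, rfl⟩
  calc (∑ i, sg s i * (f : (Fin n → ℝ) → ℝ) (x i)) ≤ ∑ _i : Fin m, M :=
        Finset.sum_le_sum fun i _ => sg_mul_le s i (hM f f.2 i)
    _ = (m : ℝ) * M := by simp [Finset.sum_const]

lemma bddA (hc : 0 ≤ c) (hb : 0 ≤ b) (e : ℕ) (s : Fin m → Bool) :
    BddAbove (Set.range fun f : ↥(NNclass n e c b) =>
      ∑ i, sg s i * max ((f : (Fin n → ℝ) → ℝ) (x i)) 0) := by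
  obtain ⟨M, hM⟩ := exists_unif_bound (c := c) (b := b) x hc hb e
  refine ⟨(m : ℝ) * M, ?_⟩
  rintro _ ⟨f, rfl⟩
  calc (∑ i, sg s i * max ((f : (Fin n → ℝ) → ℝ) (x i)) 0) ≤ ∑ _i : Fin m, M :=
        Finset.sum_le_sum fun i _ =>
          sg_mul_le s i ((abs_max_zero_le _).trans (hM f f.2 i))
    _ = (m : ℝ) * M := by simp [Finset.sum_const]

lemma A_nonneg (hc : 0 ≤ c) (hb : 0 ≤ b) (e : ℕ) (s : Fin m → Bool) :
    0 ≤ A (c := c) (b := b) x e s := by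
  have h0 := le_ciSup (bddA (c := c) (b := b) x hc hb e s)
    (⟨fun _ => (0:ℝ), zero_mem n e hc hb⟩ : ↥(NNclass n e c b))
  simpa [A] using h0

/-- The key peeling step for a fixed sign vector. -/
lemma sup_peel (hc : 0 ≤ c) (hb : 0 ≤ b) (d' : ℕ) (s : Fin m → Bool) :
    S (c := c) (b := b) x (d' + 2) s ≤
      Real.sqrt n * c *
        (A (c := c) (b := b) x (d' + 1) s +
          A (c := c) (b := b) x (d' + 1) (fun i => !(s i))) + m * b := by
  haveI : Nonempty ↥(NNclass n (d' + 2) c b) := ⟨⟨_, zero_mem n (d' + 2) hc hb⟩⟩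
  set As := A (c := c) (b := b) x (d' + 1) s with hAs
  set Af := A (c := c) (b := b) x (d' + 1) (fun i => !(s i)) with hAf
  have hAs0 : 0 ≤ As := A_nonneg x hc hb _ s
  have hAf0 : 0 ≤ Af := A_nonneg x hc hb _ _
  refine ciSup_le ?_
  rintro ⟨f, hf⟩
  obtain ⟨W, B, w, β, hW, hB, hw, hβ, hfx⟩ := hf
  set g : Fin n → (Fin n → ℝ) → ℝ := fun j y =>
    (∑ k, W (d' + 1) j k * netHidden W B d' y k) + B (d' + 1) j with hg
  have hmem : ∀ j, g j ∈ NNclass n (d' + 1) c b := fun j =>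
    ⟨W, B, fun k => W (d' + 1) j k, B (d' + 1) j, hW, hB, hW (d' + 1) j, hB (d' + 1) j,
      fun y => rfl⟩
  have hrelu : ∀ (y : Fin n → ℝ) (j : Fin n),
      netHidden W B (d' + 1) y j = max (g j y) 0 := by
    intro y j
    simp [netHidden, relu, Matrix.mulVec, dotProduct, hg]
  have hdecomp : (∑ i, sg s i * f (x i)) =
      (∑ j, w j * ∑ i, sg s i * max (g j (x i)) 0) + (∑ i, sg s i) * β := by
    have h1 : ∀ i, sg s i * f (x i) =
        (∑ j, w j * (sg s i * max (g j (x i)) 0)) + sg s i * β := by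
      intro i
      rw [hfx (x i), show d' + 2 - 1 = d' + 1 from rfl, mul_add, Finset.mul_sum]
      congr 1
      refine Finset.sum_congr rfl fun j _ => ?_
      rw [hrelu (x i) j]; ring
    rw [Finset.sum_congr rfl fun i _ => h1 i, Finset.sum_add_distrib, Finset.sum_comm,
      ← Finset.sum_mul]
    congr 1
    exact Finset.sum_congr rfl fun j _ => by rw [← Finset.mul_sum]
  have hv : ∀ j, |∑ i, sg s i * max (g j (x i)) 0| ≤ As + Af := by
    intro j
    have h1 : (∑ i, sg s i * max (g j (x i)) 0) ≤ As := by
      have := le_ciSup (bddA (c := c) (b := b) x hc hb (d' + 1) s)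
        (⟨g j, hmem j⟩ : ↥(NNclass n (d' + 1) c b))
      simpa [A, hAs] using this
    have h2 : -(∑ i, sg s i * max (g j (x i)) 0) ≤ Af := by
      have := le_ciSup (bddA (c := c) (b := b) x hc hb (d' + 1) (fun i => !(s i)))
        (⟨g j, hmem j⟩ : ↥(NNclass n (d' + 1) c b))
      simp only [A] at this
      rw [← Finset.sum_neg_distrib]
      refine le_trans (le_of_eq (Finset.sum_congr rfl fun i _ => ?_)) this
      rw [sg_not s i]; ring
    rw [abs_le]
    constructor <;> linarith
  have hsumw : (∑ j, |w j|) ≤ Real.sqrt n * c := by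
    have h1 : (∑ j, |w j|) ^ 2 ≤ (n : ℝ) * ∑ j, w j ^ 2 := by
      have := Finset.sum_mul_sq_le_sq_mul_sq univ (fun _ : Fin n => (1:ℝ)) (fun j => |w j|)
      simpa [sq_abs] using this
    have h2 : (∑ j, |w j|) ≤ Real.sqrt ((n : ℝ) * ∑ j, w j ^ 2) := by
      rw [Real.le_sqrt (Finset.sum_nonneg fun j _ => abs_nonneg _) (by positivity)]
      exact h1
    calc (∑ j, |w j|) ≤ Real.sqrt ((n : ℝ) * ∑ j, w j ^ 2) := h2
      _ = Real.sqrt n * Real.sqrt (∑ j, w j ^ 2) := Real.sqrt_mul (Nat.cast_nonneg n) _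
      _ ≤ Real.sqrt n * c := mul_le_mul_of_nonneg_left hw (Real.sqrt_nonneg _)
  rw [hdecomp]
  have hmain : (∑ j, w j * ∑ i, sg s i * max (g j (x i)) 0) ≤ Real.sqrt n * c * (As + Af) := by
    calc (∑ j, w j * ∑ i, sg s i * max (g j (x i)) 0)
        ≤ ∑ j, |w j| * (As + Af) := by
          refine Finset.sum_le_sum fun j _ => ?_
          calc w j * ∑ i, sg s i * max (g j (x i)) 0
              ≤ |w j * ∑ i, sg s i * max (g j (x i)) 0| := le_abs_self _
            _ = |w j| * |∑ i, sg s i * max (g j (x i)) 0| := abs_mul _ _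
            _ ≤ |w j| * (As + Af) := mul_le_mul_of_nonneg_left (hv j) (abs_nonneg _)
      _ = (∑ j, |w j|) * (As + Af) := by rw [Finset.sum_mul]
      _ ≤ Real.sqrt n * c * (As + Af) := mul_le_mul_of_nonneg_right hsumw (by linarith)
  have hβ2 : (∑ i, sg s i) * β ≤ m * b := by
    calc (∑ i, sg s i) * β ≤ |(∑ i, sg s i) * β| := le_abs_self _
      _ = |∑ i, sg s i| * |β| := abs_mul _ _
      _ ≤ (∑ i, |sg s i|) * b :=
          mul_le_mul (Finset.abs_sum_le_sum_abs _ _) hβ (abs_nonneg _)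
            (Finset.sum_nonneg fun i _ => abs_nonneg _)
      _ = m * b := by simp [abs_sg, Finset.sum_const]
  linarith

/-- Rewriting the Rademacher complexity so that the `1/m` factor sits outside the sup. -/
lemma rademacher_eq (hm : 0 < m) (e : ℕ) (hc : 0 ≤ c) (hb : 0 ≤ b) :
    rademacher x (NNclass n e c b) =
      (1 / 2 ^ m : ℝ) * ∑ s : Fin m → Bool, (1 / m : ℝ) * S (c := c) (b := b) x e s := by
  haveI : Nonempty ↥(NNclass n e c b) := ⟨⟨_, zero_mem n e hc hb⟩⟩
  unfold rademacher S
  congr 1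
  refine Finset.sum_congr rfl fun s _ => ?_
  rw [Real.mul_iSup_of_nonneg (by positivity)]
  simp [sg]

end Peel
end LayerPeel

/-- Layer-peeling recursion for the Rademacher complexity of depth-`d` ReLU
networks with `L_{2,∞}`-bounded weights and bounded biases:
`R(N^d) ≤ 2 c √n · R(N^{d−1}) + b`. -/
theorem rademacher_layer_peeling (n m d : ℕ) (hn : 1 ≤ n) (hm : 1 ≤ m) (hd : 2 ≤ d)
    (c b : ℝ) (hc : 0 ≤ c) (hb : 0 ≤ b) (x : Fin m → Fin n → ℝ) :
    rademacher x (NNclass n d c b) ≤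
      2 * c * Real.sqrt n * rademacher x (NNclass n (d - 1) c b) + b := by
  classical
  open LayerPeel in
  obtain ⟨d', rfl⟩ : ∃ d', d = d' + 2 := ⟨d - 2, by omega⟩
  haveI hne1 : Nonempty ↥(NNclass n (d' + 1) c b) := ⟨⟨_, zero_mem n (d' + 1) hc hb⟩⟩
  have hm0 : (0:ℝ) < m := by exact_mod_cast hm
  have h2m : (0:ℝ) < 2 ^ m := by positivity
  -- rewrite both Rademacher complexities
  rw [show d' + 2 - 1 = d' + 1 from rfl,
    rademacher_eq (c := c) (b := b) x hm (d' + 2) hc hb,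
    rademacher_eq (c := c) (b := b) x hm (d' + 1) hc hb]
  -- contraction
  obtain ⟨M, hM⟩ := exists_unif_bound (c := c) (b := b) x hc hb (d' + 1)
  have hcontr : (∑ s : Fin m → Bool, A (c := c) (b := b) x (d' + 1) s) ≤
      ∑ s : Fin m → Bool, S (c := c) (b := b) x (d' + 1) s := by
    have := contraction (m := m)
      (fun (f : ↥(NNclass n (d' + 1) c b)) i => (f : (Fin n → ℝ) → ℝ) (x i)) M
      (fun f i => hM f f.2 i)
    simpa [A, S] using this
  -- flip symmetry
  have hflipinv : Function.Involutive (fun (s : Fin m → Bool) => fun i => !(s i)) := by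
    intro s; funext i; simp
  have hflip : (∑ s : Fin m → Bool, A (c := c) (b := b) x (d' + 1) (fun i => !(s i))) =
      ∑ s : Fin m → Bool, A (c := c) (b := b) x (d' + 1) s :=
    Equiv.sum_comp hflipinv.toPerm (A (c := c) (b := b) x (d' + 1))
  -- peel each sign vector
  have hpeel : (∑ s : Fin m → Bool, (1 / m : ℝ) * S (c := c) (b := b) x (d' + 2) s) ≤
      ∑ s : Fin m → Bool, (1 / m : ℝ) *
        (Real.sqrt n * c * (A (c := c) (b := b) x (d' + 1) s +
          A (c := c) (b := b) x (d' + 1) (fun i => !(s i))) + m * b) :=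
    Finset.sum_le_sum fun s _ => mul_le_mul_of_nonneg_left
      (sup_peel x hc hb d' s) (by positivity)
  have hsplit : (∑ s : Fin m → Bool, (1 / m : ℝ) *
        (Real.sqrt n * c * (A (c := c) (b := b) x (d' + 1) s +
          A (c := c) (b := b) x (d' + 1) (fun i => !(s i))) + m * b)) =
      (2 * Real.sqrt n * c / m) * (∑ s : Fin m → Bool, A (c := c) (b := b) x (d' + 1) s) +
        2 ^ m * b := by
    rw [Finset.sum_congr rfl (fun s _ => by ring :
      ∀ s ∈ (univ : Finset (Fin m → Bool)), (1 / m : ℝ) *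
        (Real.sqrt n * c * (A (c := c) (b := b) x (d' + 1) s +
          A (c := c) (b := b) x (d' + 1) (fun i => !(s i))) + m * b) =
        (Real.sqrt n * c / m) * A (c := c) (b := b) x (d' + 1) s +
          (Real.sqrt n * c / m) * A (c := c) (b := b) x (d' + 1) (fun i => !(s i)) +
          (1 / m : ℝ) * (m * b))]
    rw [Finset.sum_add_distrib, Finset.sum_add_distrib, ← Finset.mul_sum, ← Finset.mul_sum,
      hflip, Finset.sum_const]
    have hcard : (Finset.univ : Finset (Fin m → Bool)).card = 2 ^ m := by
      simp [Fintype.card_fun]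
    rw [hcard]
    have : (1 / m : ℝ) * (m * b) = b := by field_simp
    rw [this]
    push_cast
    ring
  -- put everything together
  have hfinal : (1 / 2 ^ m : ℝ) *
      (∑ s : Fin m → Bool, (1 / m : ℝ) * S (c := c) (b := b) x (d' + 2) s) ≤
      2 * c * Real.sqrt n *
        ((1 / 2 ^ m : ℝ) * ∑ s : Fin m → Bool, (1 / m : ℝ) *
          S (c := c) (b := b) x (d' + 1) s) + b := by
    have h1 : (1 / 2 ^ m : ℝ) *
        (∑ s : Fin m → Bool, (1 / m : ℝ) * S (c := c) (b := b) x (d' + 2) s) ≤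
        (1 / 2 ^ m : ℝ) * ((2 * Real.sqrt n * c / m) *
          (∑ s : Fin m → Bool, A (c := c) (b := b) x (d' + 1) s) + 2 ^ m * b) := by
      refine mul_le_mul_of_nonneg_left ?_ (by positivity)
      exact hpeel.trans (le_of_eq hsplit)
    have h2 : (1 / 2 ^ m : ℝ) * ((2 * Real.sqrt n * c / m) *
          (∑ s : Fin m → Bool, A (c := c) (b := b) x (d' + 1) s) + 2 ^ m * b) ≤
        (1 / 2 ^ m : ℝ) * ((2 * Real.sqrt n * c / m) *
          (∑ s : Fin m → Bool, S (c := c) (b := b) x (d' + 1) s) + 2 ^ m * b) := by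
      refine mul_le_mul_of_nonneg_left (add_le_add_left ?_ _) (by positivity)
      exact mul_le_mul_of_nonneg_left hcontr (by positivity)
    have h3 : (1 / 2 ^ m : ℝ) * ((2 * Real.sqrt n * c / m) *
          (∑ s : Fin m → Bool, S (c := c) (b := b) x (d' + 1) s) + 2 ^ m * b) =
        2 * c * Real.sqrt n *
          ((1 / 2 ^ m : ℝ) * ∑ s : Fin m → Bool, (1 / m : ℝ) *
            S (c := c) (b := b) x (d' + 1) s) + b := by
      rw [← Finset.mul_sum]
      field_simp
    exact h1.trans (h2.trans_eq h3)
  exact hfinal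
end

section
/- Let n, m ≥ 1, d ≥ 1, c ≥ 0, b ≥ 0, and let x_1, …, x_m ∈ ℝⁿ. Let N^{d,n}_{c,b} denote the class of functions f : ℝⁿ → ℝ of the form f(x) = ⟨w, h_{d−1}(x)⟩ + β, where h_0(x) = x, h_l(x) = ReLU(W_l h_{l−1}(x) + B_l) for l = 1, …, d−1, the W_l are real n×n matrices with ‖W_l‖_{2,∞} ≤ c, w ∈ ℝⁿ with ‖w‖₂ ≤ c, B_l ∈ ℝⁿ with ‖B_l‖_∞ ≤ b, and β ∈ ℝ with |β| ≤ b. Then the empirical Rademacher complexity of N^{d,n}_{c,b} on x_1, …, x_m satisfies R(N^{d,n}_{c,b}) ≤ (2c√n)^{d−1} · c · √(2/m) · max_{1≤i≤m} ‖x_i‖₂ + b · Σ_{j=0}^{d−1} (2c√n)^j. -/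
namespace RadAux

noncomputable def sg (b : Bool) : ℝ := if b then 1 else -1
lemma sg_not (b : Bool) : sg (!b) = - sg b := by cases b <;> simp [sg]
lemma abs_sg (b : Bool) : |sg b| = 1 := by cases b <;> simp [sg]
lemma sum_update_flip {m : ℕ} (i₀ : Fin m) (F : (Fin m → Bool) → ℝ) :
    ∑ s : Fin m → Bool, F (Function.update s i₀ (! s i₀)) = ∑ s : Fin m → Bool, F s := by
  have hinv : Function.Involutive (fun s : Fin m → Bool => Function.update s i₀ (! s i₀)) := by
    intro s; funext j
    rcases eq_or_ne j i₀ with rfl | h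
    · simp
    · simp [Function.update_of_ne h]
  exact Equiv.sum_comp hinv.toPerm F
lemma sum_neg_flip {m : ℕ} (F : (Fin m → Bool) → ℝ) :
    ∑ s : Fin m → Bool, F (fun i => ! s i) = ∑ s : Fin m → Bool, F s := by
  have hinv : Function.Involutive (fun s : Fin m → Bool => (fun i => ! s i)) := by
    intro s; funext j; simp
  exact Equiv.sum_comp hinv.toPerm F

lemma bdd_range {ι : Sort*} {f : ι → ℝ} {C : ℝ} (h : ∀ t, f t ≤ C) : BddAbove (Set.range f) :=
  ⟨C, by rintro y ⟨t, rfl⟩; exact h t⟩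

lemma sup_add_sup_le {ι : Type*} [Nonempty ι] (H ψ α : ι → ℝ)
    (hlip : ∀ t u, |ψ t - ψ u| ≤ |α t - α u|)
    (C D : ℝ) (hH : ∀ t, |H t| ≤ C) (hα : ∀ t, |α t| ≤ D) (hψ : ∀ t, |ψ t| ≤ D) :
    ((⨆ t, (H t + ψ t)) + ⨆ t, (H t - ψ t)) ≤ (⨆ t, (H t + α t)) + ⨆ t, (H t - α t) := by
  have bddp : BddAbove (Set.range fun t => H t + α t) :=
    bdd_range (C := C + D) fun t => by
      have h1 := abs_le.1 (hH t); have h2 := abs_le.1 (hα t); linarith [h1.2, h2.2]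
  have bddm : BddAbove (Set.range fun t => H t - α t) :=
    bdd_range (C := C + D) fun t => by
      have h1 := abs_le.1 (hH t); have h2 := abs_le.1 (hα t); linarith [h1.2, h2.1]
  set R := (⨆ t, (H t + α t)) + ⨆ t, (H t - α t) with hR
  have key : ∀ t u, (H t + ψ t) + (H u - ψ u) ≤ R := by
    intro t u
    have h2 : ψ t - ψ u ≤ |α t - α u| := (le_abs_self _).trans (hlip t u)
    rcases abs_cases (α t - α u) with ⟨he, _⟩ | ⟨he, _⟩
    · have l1 : H t + α t ≤ ⨆ t, (H t + α t) := le_ciSup bddp t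
      have l2 : H u - α u ≤ ⨆ t, (H t - α t) := le_ciSup bddm u
      rw [he] at h2; rw [hR]; linarith
    · have l1 : H u + α u ≤ ⨆ t, (H t + α t) := le_ciSup bddp u
      have l2 : H t - α t ≤ ⨆ t, (H t - α t) := le_ciSup bddm t
      rw [he] at h2; rw [hR]; linarith
  have s1 : (⨆ t, (H t + ψ t)) ≤ R - ⨆ u, (H u - ψ u) := by
    refine ciSup_le fun t => ?_
    have : (⨆ u, (H u - ψ u)) ≤ R - (H t + ψ t) := ciSup_le fun u => by linarith [key t u]
    linarith
  linarith [s1]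

lemma contraction_step {m : ℕ} {ι : Type*} [Nonempty ι] (a : ι → Fin m → ℝ)
    (φ : ℝ → ℝ) (hφ : ∀ x y, |φ x - φ y| ≤ |x - y|) (C : ℝ) (hC : 0 ≤ C)
    (ha : ∀ t i, |a t i| ≤ C) (hφa : ∀ t i, |φ (a t i)| ≤ C)
    (I : Finset (Fin m)) (i₀ : Fin m) (hi₀ : i₀ ∉ I) :
    ∑ s : Fin m → Bool, ⨆ t, (∑ i, sg (s i) * (if i ∈ insert i₀ I then φ (a t i) else a t i))
    ≤ ∑ s : Fin m → Bool, ⨆ t, (∑ i, sg (s i) * (if i ∈ I then φ (a t i) else a t i)) := by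
  classical
  set H : (Fin m → Bool) → ι → ℝ := fun s t =>
    ∑ i ∈ Finset.univ.erase i₀, sg (s i) * (if i ∈ I then φ (a t i) else a t i) with hHdef
  have hFeq : ∀ (s : Fin m → Bool) (t : ι),
      (∑ i, sg (s i) * (if i ∈ insert i₀ I then φ (a t i) else a t i))
        = H s t + sg (s i₀) * φ (a t i₀) := by
    intro s t
    rw [← Finset.add_sum_erase _ _ (Finset.mem_univ i₀), if_pos (Finset.mem_insert_self _ _)]
    rw [add_comm]
    congr 1
    refine Finset.sum_congr rfl fun i hi => ?_
    have hne : i ≠ i₀ := (Finset.mem_erase.1 hi).1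
    congr 1
    simp [Finset.mem_insert, hne]
  have hGeq : ∀ (s : Fin m → Bool) (t : ι),
      (∑ i, sg (s i) * (if i ∈ I then φ (a t i) else a t i))
        = H s t + sg (s i₀) * a t i₀ := by
    intro s t
    rw [← Finset.add_sum_erase _ _ (Finset.mem_univ i₀), if_neg hi₀, add_comm]
  have hHbd : ∀ s t, |H s t| ≤ (m : ℝ) * C := by
    intro s t
    calc |H s t| ≤ ∑ i ∈ Finset.univ.erase i₀, |sg (s i) * (if i ∈ I then φ (a t i) else a t i)| :=
          Finset.abs_sum_le_sum_abs _ _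
      _ ≤ ∑ _i ∈ Finset.univ.erase i₀, C := by
          refine Finset.sum_le_sum fun i _ => ?_
          rw [abs_mul, abs_sg, one_mul]
          split_ifs
          · exact hφa t i
          · exact ha t i
      _ ≤ (m : ℝ) * C := by
          rw [Finset.sum_const, nsmul_eq_mul]
          have : ((Finset.univ.erase i₀).card : ℝ) ≤ (m : ℝ) := by
            exact_mod_cast (Finset.card_erase_le.trans (by simp))
          nlinarith
  have hHflip : ∀ s t, H (Function.update s i₀ (! s i₀)) t = H s t := by
    intro s t
    refine Finset.sum_congr rfl fun i hi => ?_
    rw [Function.update_of_ne (Finset.mem_erase.1 hi).1]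
  set Fs : (Fin m → Bool) → ℝ := fun s => ⨆ t, (H s t + sg (s i₀) * φ (a t i₀)) with hFs
  set Gs : (Fin m → Bool) → ℝ := fun s => ⨆ t, (H s t + sg (s i₀) * a t i₀) with hGs
  have goalF : ∀ s : Fin m → Bool,
      (⨆ t, (∑ i, sg (s i) * (if i ∈ insert i₀ I then φ (a t i) else a t i))) = Fs s :=
    fun s => iSup_congr fun t => hFeq s t
  have goalG : ∀ s : Fin m → Bool,
      (⨆ t, (∑ i, sg (s i) * (if i ∈ I then φ (a t i) else a t i))) = Gs s :=
    fun s => iSup_congr fun t => hGeq s t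
  rw [Finset.sum_congr rfl fun s _ => goalF s, Finset.sum_congr rfl fun s _ => goalG s]
  have pair : ∀ s : Fin m → Bool,
      Fs s + Fs (Function.update s i₀ (! s i₀)) ≤ Gs s + Gs (Function.update s i₀ (! s i₀)) := by
    intro s
    have e1 : Fs (Function.update s i₀ (! s i₀)) = ⨆ t, (H s t - sg (s i₀) * φ (a t i₀)) := by
      refine iSup_congr fun t => ?_
      rw [hHflip, Function.update_self, sg_not]; ring
    have e2 : Gs (Function.update s i₀ (! s i₀)) = ⨆ t, (H s t - sg (s i₀) * a t i₀) := by
      refine iSup_congr fun t => ?_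
      rw [hHflip, Function.update_self, sg_not]; ring
    rw [e1, e2]
    refine sup_add_sup_le (H s) _ _ ?_ ((m : ℝ) * C) C (hHbd s) ?_ ?_
    · intro t u
      have : sg (s i₀) * φ (a t i₀) - sg (s i₀) * φ (a u i₀)
          = sg (s i₀) * (φ (a t i₀) - φ (a u i₀)) := by ring
      rw [this, abs_mul, abs_sg, one_mul]
      have : sg (s i₀) * a t i₀ - sg (s i₀) * a u i₀ = sg (s i₀) * (a t i₀ - a u i₀) := by ring
      rw [this, abs_mul, abs_sg, one_mul]
      exact hφ _ _
    · intro t; rw [abs_mul, abs_sg, one_mul]; exact ha t i₀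
    · intro t; rw [abs_mul, abs_sg, one_mul]; exact hφa t i₀
  have hF2 : ∑ s : Fin m → Bool, (Fs s + Fs (Function.update s i₀ (! s i₀)))
      = 2 * ∑ s : Fin m → Bool, Fs s := by
    rw [Finset.sum_add_distrib, sum_update_flip i₀ Fs]; ring
  have hG2 : ∑ s : Fin m → Bool, (Gs s + Gs (Function.update s i₀ (! s i₀)))
      = 2 * ∑ s : Fin m → Bool, Gs s := by
    rw [Finset.sum_add_distrib, sum_update_flip i₀ Gs]; ring
  have := Finset.sum_le_sum (fun s (_ : s ∈ Finset.univ) => pair s)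
  rw [hF2, hG2] at this
  linarith

lemma contraction {m : ℕ} {ι : Type*} [Nonempty ι] (a : ι → Fin m → ℝ)
    (φ : ℝ → ℝ) (hφ : ∀ x y, |φ x - φ y| ≤ |x - y|) (C : ℝ) (hC : 0 ≤ C)
    (ha : ∀ t i, |a t i| ≤ C) (hφa : ∀ t i, |φ (a t i)| ≤ C) :
    ∑ s : Fin m → Bool, ⨆ t, ∑ i, sg (s i) * φ (a t i)
      ≤ ∑ s : Fin m → Bool, ⨆ t, ∑ i, sg (s i) * a t i := by
  classical
  have key : ∀ I : Finset (Fin m),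
      ∑ s : Fin m → Bool, ⨆ t, (∑ i, sg (s i) * (if i ∈ I then φ (a t i) else a t i))
        ≤ ∑ s : Fin m → Bool, ⨆ t, ∑ i, sg (s i) * a t i := by
    intro I
    induction I using Finset.induction_on with
    | empty => simp
    | insert i I hi ih =>
        exact le_trans (contraction_step a φ hφ C hC ha hφa _ _ hi) ih
  have := key Finset.univ
  simpa using this

lemma symmetrization {m : ℕ} {ι : Type*} [Nonempty ι] (v : ι → Fin m → ℝ) (C : ℝ)
    (hv : ∀ t i, |v t i| ≤ C) (t₀ : ι) (h0 : ∀ i, v t₀ i = 0) :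
    ∑ s : Fin m → Bool, ⨆ t, |∑ i, sg (s i) * v t i|
      ≤ 2 * ∑ s : Fin m → Bool, ⨆ t, ∑ i, sg (s i) * v t i := by
  have habs : ∀ (s : Fin m → Bool) t, |∑ i, sg (s i) * v t i| ≤ (m : ℝ) * C := by
    intro s t
    calc |∑ i, sg (s i) * v t i| ≤ ∑ i, |sg (s i) * v t i| := Finset.abs_sum_le_sum_abs _ _
      _ ≤ ∑ _i : Fin m, C := Finset.sum_le_sum fun i _ => by
          rw [abs_mul, abs_sg, one_mul]; exact hv t i
      _ = (m : ℝ) * C := by simp [mul_comm]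
  have bddA : ∀ s : Fin m → Bool, BddAbove (Set.range fun t => ∑ i, sg (s i) * v t i) :=
    fun s => bdd_range fun t => le_of_abs_le (habs s t)
  have supA_nonneg : ∀ s : Fin m → Bool, 0 ≤ ⨆ t, ∑ i, sg (s i) * v t i := by
    intro s
    have : (∑ i, sg (s i) * v t₀ i) ≤ ⨆ t, ∑ i, sg (s i) * v t i := le_ciSup (bddA s) t₀
    simpa [h0] using this
  have step1 : ∀ s : Fin m → Bool, (⨆ t, |∑ i, sg (s i) * v t i|)
      ≤ (⨆ t, ∑ i, sg (s i) * v t i) + ⨆ t, ∑ i, sg (s i) * (- v t i) := by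
    intro s
    have bddB : BddAbove (Set.range fun t => ∑ i, sg (s i) * (- v t i)) :=
      bdd_range (C := (m : ℝ) * C) fun t => by
        have h1 := habs s t
        have : |∑ i, sg (s i) * (- v t i)| = |∑ i, sg (s i) * v t i| := by
          rw [show (∑ i, sg (s i) * (- v t i)) = -∑ i, sg (s i) * v t i by
            rw [← Finset.sum_neg_distrib]; exact Finset.sum_congr rfl fun i _ => by ring,
            abs_neg]
        linarith [le_of_abs_le (this ▸ h1)]
    refine ciSup_le fun t => ?_
    rcases abs_cases (∑ i, sg (s i) * v t i) with ⟨he, _⟩ | ⟨he, _⟩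
    · rw [he]
      have h1 : (∑ i, sg (s i) * v t i) ≤ ⨆ t, ∑ i, sg (s i) * v t i := le_ciSup (bddA s) t
      have h2 : (0:ℝ) ≤ ⨆ t, ∑ i, sg (s i) * (- v t i) := by
        have : (∑ i, sg (s i) * (- v t₀ i)) ≤ ⨆ t, ∑ i, sg (s i) * (- v t i) := le_ciSup bddB t₀
        simpa [h0] using this
      linarith
    · rw [he]
      have h1 : (∑ i, sg (s i) * (- v t i)) ≤ ⨆ t, ∑ i, sg (s i) * (- v t i) := le_ciSup bddB t
      have h1' : -(∑ i, sg (s i) * v t i) = ∑ i, sg (s i) * (- v t i) := by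
        rw [← Finset.sum_neg_distrib]; exact Finset.sum_congr rfl fun i _ => by ring
      linarith [supA_nonneg s, h1' ▸ h1]
  have negsum : ∑ s : Fin m → Bool, ⨆ t, ∑ i, sg (s i) * (- v t i)
      = ∑ s : Fin m → Bool, ⨆ t, ∑ i, sg (s i) * v t i := by
    rw [← sum_neg_flip (fun s => ⨆ t, ∑ i, sg (s i) * v t i)]
    refine Finset.sum_congr rfl fun s _ => iSup_congr fun t => Finset.sum_congr rfl fun i _ => ?_
    rw [sg_not]; ring
  calc ∑ s : Fin m → Bool, ⨆ t, |∑ i, sg (s i) * v t i|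
      ≤ ∑ s : Fin m → Bool, ((⨆ t, ∑ i, sg (s i) * v t i) + ⨆ t, ∑ i, sg (s i) * (- v t i)) :=
        Finset.sum_le_sum fun s _ => step1 s
    _ = 2 * ∑ s : Fin m → Bool, ⨆ t, ∑ i, sg (s i) * v t i := by
        rw [Finset.sum_add_distrib, negsum]; ring



lemma abs_dot_le {n : ℕ} (w h : Fin n → ℝ) :
    |∑ j, w j * h j| ≤ Real.sqrt (∑ j, w j ^ 2) * Real.sqrt (∑ j, h j ^ 2) := by
  calc |∑ j, w j * h j| ≤ ∑ j, |w j * h j| := Finset.abs_sum_le_sum_abs _ _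
    _ = ∑ j, |w j| * |h j| := by simp [abs_mul]
    _ ≤ Real.sqrt (∑ j, |w j| ^ 2) * Real.sqrt (∑ j, |h j| ^ 2) :=
        Real.sum_mul_le_sqrt_mul_sqrt _ _ _
    _ = Real.sqrt (∑ j, w j ^ 2) * Real.sqrt (∑ j, h j ^ 2) := by simp [sq_abs]

lemma sqrt_sum_le_of_bound {n : ℕ} (h : Fin n → ℝ) (M : ℝ) (hM : 0 ≤ M)
    (hb : ∀ j, |h j| ≤ M) : Real.sqrt (∑ j, h j ^ 2) ≤ Real.sqrt (n : ℝ) * M := by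
  have h1 : (∑ j, h j ^ 2) ≤ (n : ℝ) * M ^ 2 := by
    calc (∑ j, h j ^ 2) ≤ ∑ _j : Fin n, M ^ 2 := Finset.sum_le_sum fun j _ => by
          rw [← sq_abs]; exact pow_le_pow_left₀ (abs_nonneg _) (hb j) 2
      _ = (n : ℝ) * M ^ 2 := by simp [mul_comm]
  calc Real.sqrt (∑ j, h j ^ 2) ≤ Real.sqrt ((n : ℝ) * M ^ 2) := Real.sqrt_le_sqrt h1
    _ = Real.sqrt (n : ℝ) * M := by
        rw [Real.sqrt_mul (by positivity), Real.sqrt_sq hM]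

/-- Uniform bound on hidden layers. -/
lemma netHidden_bd {n : ℕ} (c b : ℝ) (hc : 0 ≤ c) (hb : 0 ≤ b) (X : ℝ) (hX : 0 ≤ X) (l : ℕ) :
    ∃ D : ℝ, 0 ≤ D ∧ ∀ (W : ℕ → Matrix (Fin n) (Fin n) ℝ) (B : ℕ → Fin n → ℝ),
      (∀ l' i, Real.sqrt (∑ j, W l' i j ^ 2) ≤ c) → (∀ l' i, |B l' i| ≤ b) →
      ∀ x : Fin n → ℝ, Real.sqrt (∑ j, x j ^ 2) ≤ X →
        Real.sqrt (∑ j, (netHidden W B l x j) ^ 2) ≤ D := by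
  induction l with
  | zero => exact ⟨X, hX, fun W B _ _ x hx => by simpa [netHidden] using hx⟩
  | succ l ih =>
      obtain ⟨D, hD, hDle⟩ := ih
      refine ⟨Real.sqrt (n : ℝ) * (c * D + b), by positivity, fun W B hW hB x hx => ?_⟩
      have hcoord : ∀ j, |netHidden W B (l + 1) x j| ≤ c * D + b := by
        intro j
        show |max (((W (l+1)).mulVec (netHidden W B l x) + B (l+1)) j) 0| ≤ c * D + b
        have h0 : |max (((W (l+1)).mulVec (netHidden W B l x) + B (l+1)) j) 0|
            ≤ |((W (l+1)).mulVec (netHidden W B l x) + B (l+1)) j| := by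
          rcases le_or_gt (((W (l+1)).mulVec (netHidden W B l x) + B (l+1)) j) 0 with h | h
          · rw [max_eq_right h]; simp
          · rw [max_eq_left h.le]
        refine h0.trans ?_
        have : ((W (l+1)).mulVec (netHidden W B l x) + B (l+1)) j
            = (∑ k, W (l+1) j k * netHidden W B l x k) + B (l+1) j := by
          simp [Matrix.mulVec, dotProduct]
        rw [this]
        calc |(∑ k, W (l+1) j k * netHidden W B l x k) + B (l+1) j|
            ≤ |∑ k, W (l+1) j k * netHidden W B l x k| + |B (l+1) j| := abs_add_le _ _
          _ ≤ Real.sqrt (∑ k, W (l+1) j k ^ 2) * Real.sqrt (∑ k, netHidden W B l x k ^ 2) + b :=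
              add_le_add (abs_dot_le _ _) (hB _ _)
          _ ≤ c * D + b := by
              refine add_le_add_left (mul_le_mul (hW _ _) (hDle W B hW hB x hx)
                (Real.sqrt_nonneg _) hc) b
      exact sqrt_sum_le_of_bound _ _ (by positivity) hcoord

lemma zero_mem (n e : ℕ) (c b : ℝ) (hc : 0 ≤ c) (hb : 0 ≤ b) :
    (fun _ => (0:ℝ)) ∈ NNclass n e c b := by
  refine ⟨0, 0, 0, 0, ?_, ?_, ?_, ?_, ?_⟩ <;> simp [hc, hb]


lemma sg_sq (b : Bool) : sg b * sg b = 1 := by cases b <;> simp [sg]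


lemma sum_sg_mul_sg {m : ℕ} {i i' : Fin m} (h : i ≠ i') :
    ∑ s : Fin m → Bool, sg (s i) * sg (s i') = 0 := by
  have h2 := sum_update_flip i (fun s => sg (s i) * sg (s i'))
  simp only [Function.update_self, Function.update_of_ne (Ne.symm h), sg_not] at h2
  have h3 : ∑ s : Fin m → Bool, -sg (s i) * sg (s i') = -∑ s : Fin m → Bool, sg (s i) * sg (s i') := by
    rw [← Finset.sum_neg_distrib]; exact Finset.sum_congr rfl fun s _ => by ring
  rw [h3] at h2; linarith


lemma card_signs (m : ℕ) : (Finset.univ : Finset (Fin m → Bool)).card = 2 ^ m := by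
  simp [Finset.card_univ]


lemma sum_sq_expand {m : ℕ} (a : Fin m → ℝ) :
    ∑ s : Fin m → Bool, (∑ i, sg (s i) * a i) ^ 2 = 2 ^ m * ∑ i, a i ^ 2 := by
  have h1 : ∀ s : Fin m → Bool, (∑ i, sg (s i) * a i) ^ 2
      = ∑ i, ∑ i', (a i * a i') * (sg (s i) * sg (s i')) := by
    intro s
    rw [sq, Finset.sum_mul_sum]
    exact Finset.sum_congr rfl fun i _ => Finset.sum_congr rfl fun i' _ => by ring
  calc ∑ s : Fin m → Bool, (∑ i, sg (s i) * a i) ^ 2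
      = ∑ s : Fin m → Bool, ∑ i, ∑ i', (a i * a i') * (sg (s i) * sg (s i')) := by
        exact Finset.sum_congr rfl fun s _ => h1 s
    _ = ∑ i, ∑ i', (a i * a i') * ∑ s : Fin m → Bool, (sg (s i) * sg (s i')) := by
        rw [Finset.sum_comm]
        refine Finset.sum_congr rfl fun i _ => ?_
        rw [Finset.sum_comm]
        exact Finset.sum_congr rfl fun i' _ => by rw [Finset.mul_sum]
    _ = ∑ i, (a i * a i) * 2 ^ m := by
        refine Finset.sum_congr rfl fun i _ => ?_
        rw [Finset.sum_eq_single i]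
        · congr 1
          rw [show ∑ s : Fin m → Bool, sg (s i) * sg (s i) = ∑ s : Fin m → Bool, (1:ℝ) from
            Finset.sum_congr rfl fun s _ => sg_sq _]
          simp [card_signs]
        · intro i' _ hne; rw [sum_sg_mul_sg (Ne.symm hne), mul_zero]
        · intro hi; exact absurd (Finset.mem_univ i) hi
    _ = 2 ^ m * ∑ i, a i ^ 2 := by rw [Finset.mul_sum]; exact Finset.sum_congr rfl fun i _ => by ring


end RadAux

section BaseTest
open RadAux

lemma rademacher_eq {n m : ℕ} (x : Fin m → Fin n → ℝ) (K : Set ((Fin n → ℝ) → ℝ)) :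
    rademacher x K = (1 / 2 ^ m : ℝ) * ∑ s : Fin m → Bool,
      ⨆ f : K, (1 / m : ℝ) * ∑ i, sg (s i) * (f : (Fin n → ℝ) → ℝ) (x i) := rfl

lemma base_case (n m : ℕ) (hn : 1 ≤ n) (hm : 1 ≤ m) (c b : ℝ) (hc : 0 ≤ c) (hb : 0 ≤ b)
    (x : Fin m → Fin n → ℝ) :
    rademacher x (NNclass n 1 c b) ≤
      c * Real.sqrt (2 / m) * (⨆ i : Fin m, Real.sqrt (∑ j, x i j ^ 2)) + b := by
  have hm0 : (0:ℝ) < m := by exact_mod_cast hm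
  set X := ⨆ i : Fin m, Real.sqrt (∑ j, x i j ^ 2) with hX
  have hXi : ∀ i, Real.sqrt (∑ j, x i j ^ 2) ≤ X :=
    fun i => le_ciSup (f := fun i : Fin m => Real.sqrt (∑ j, x i j ^ 2))
      (Set.Finite.bddAbove (Set.finite_range _)) i
  have hX0 : 0 ≤ X := (Real.sqrt_nonneg _).trans (hXi ⟨0, hm⟩)
  haveI : Nonempty ↥(NNclass n 1 c b) := ⟨⟨_, zero_mem n 1 c b hc hb⟩⟩
  rw [rademacher_eq]
  set Q : (Fin m → Bool) → ℝ := fun s => ∑ j, (∑ i, sg (s i) * x i j) ^ 2 with hQ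
  have hQ0 : ∀ s, 0 ≤ Q s := fun s => by positivity
  have hsup : ∀ s : Fin m → Bool,
      (⨆ f : ↥(NNclass n 1 c b), (1/(m:ℝ)) * ∑ i, sg (s i) * (f : (Fin n → ℝ) → ℝ) (x i))
      ≤ (1/(m:ℝ)) * (c * Real.sqrt (Q s) + b * m) := by
    intro s
    refine ciSup_le ?_
    rintro ⟨f, hf⟩
    simp only [NNclass, Set.mem_setOf_eq] at hf
    obtain ⟨W, B, w, β, hW, hB, hw, hβ, hfx⟩ := hf
    have hfv : ∀ i, f (x i) = (∑ j, w j * x i j) + β := fun i => by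
      simpa [netHidden] using hfx (x i)
    have hswap : ∑ i, sg (s i) * f (x i)
        = (∑ j, w j * (∑ i, sg (s i) * x i j)) + β * (∑ i, sg (s i)) := by
      calc ∑ i, sg (s i) * f (x i)
          = ∑ i, ((∑ j, w j * (sg (s i) * x i j)) + β * sg (s i)) := by
            refine Finset.sum_congr rfl fun i _ => ?_
            rw [hfv i, mul_add, Finset.mul_sum]
            congr 1
            · exact Finset.sum_congr rfl fun j _ => by ring
            · ring
        _ = (∑ i, ∑ j, w j * (sg (s i) * x i j)) + β * ∑ i, sg (s i) := by
            rw [Finset.sum_add_distrib, ← Finset.mul_sum]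
        _ = (∑ j, w j * (∑ i, sg (s i) * x i j)) + β * ∑ i, sg (s i) := by
            congr 1
            rw [Finset.sum_comm]
            exact Finset.sum_congr rfl fun j _ => by
              rw [Finset.mul_sum]
    have hbd : ∑ i, sg (s i) * f (x i) ≤ c * Real.sqrt (Q s) + b * m := by
      rw [hswap]
      have h1 : |∑ j, w j * (∑ i, sg (s i) * x i j)| ≤ c * Real.sqrt (Q s) := by
        refine (abs_dot_le w _).trans ?_
        exact mul_le_mul_of_nonneg_right hw (Real.sqrt_nonneg _)
      have h2 : |β * ∑ i, sg (s i)| ≤ b * m := by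
        rw [abs_mul]
        refine mul_le_mul hβ ?_ (abs_nonneg _) hb
        calc |∑ i, sg (s i)| ≤ ∑ i, |sg (s i)| := Finset.abs_sum_le_sum_abs _ _
          _ = m := by simp [abs_sg]
      calc (∑ j, w j * (∑ i, sg (s i) * x i j)) + β * (∑ i, sg (s i))
          ≤ |∑ j, w j * (∑ i, sg (s i) * x i j)| + |β * (∑ i, sg (s i))| :=
            add_le_add (le_abs_self _) (le_abs_self _)
        _ ≤ c * Real.sqrt (Q s) + b * m := add_le_add h1 h2
    exact mul_le_mul_of_nonneg_left hbd (by positivity)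
  have hQsum : ∑ s : Fin m → Bool, Q s ≤ 2 ^ m * ((m:ℝ) * X ^ 2) := by
    have h1 : ∑ s : Fin m → Bool, Q s
        = ∑ j, ∑ s : Fin m → Bool, (∑ i, sg (s i) * x i j) ^ 2 := Finset.sum_comm
    rw [h1, Finset.sum_congr rfl fun j (_ : j ∈ Finset.univ) => sum_sq_expand (fun i => x i j),
      ← Finset.mul_sum]
    have h2 : ∑ j, ∑ i, x i j ^ 2 ≤ (m:ℝ) * X ^ 2 := by
      rw [Finset.sum_comm]
      calc ∑ i, ∑ j, x i j ^ 2 ≤ ∑ _i : Fin m, X ^ 2 := by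
            refine Finset.sum_le_sum fun i _ => ?_
            have hnn : (0:ℝ) ≤ ∑ j, x i j ^ 2 := by positivity
            nlinarith [Real.sq_sqrt hnn, Real.sqrt_nonneg (∑ j, x i j ^ 2), hXi i]
        _ = (m:ℝ) * X ^ 2 := by simp [mul_comm]
    exact mul_le_mul_of_nonneg_left h2 (by positivity)
  have hsq : ∑ s : Fin m → Bool, Real.sqrt (Q s) ≤ 2 ^ m * (Real.sqrt m * X) := by
    have hcs : ∑ s : Fin m → Bool, Real.sqrt (Q s)
        ≤ Real.sqrt (∑ _s : Fin m → Bool, (1:ℝ) ^ 2) *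
          Real.sqrt (∑ s : Fin m → Bool, Real.sqrt (Q s) ^ 2) := by
      have := Real.sum_mul_le_sqrt_mul_sqrt (Finset.univ : Finset (Fin m → Bool))
        (fun _ => (1:ℝ)) (fun s => Real.sqrt (Q s))
      simpa using this
    have e1 : (∑ _s : Fin m → Bool, (1:ℝ) ^ 2) = 2 ^ m := by
      simp [card_signs]
    have e2 : (∑ s : Fin m → Bool, Real.sqrt (Q s) ^ 2) = ∑ s : Fin m → Bool, Q s := by
      exact Finset.sum_congr rfl fun s _ => Real.sq_sqrt (hQ0 s)
    rw [e1, e2] at hcs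
    refine hcs.trans ?_
    have h3 : Real.sqrt (∑ s : Fin m → Bool, Q s) ≤ Real.sqrt (2 ^ m * ((m:ℝ) * X ^ 2)) :=
      Real.sqrt_le_sqrt hQsum
    have h4 : Real.sqrt ((2:ℝ) ^ m * ((m:ℝ) * X ^ 2)) = Real.sqrt (2 ^ m) * (Real.sqrt m * X) := by
      rw [Real.sqrt_mul (by positivity), Real.sqrt_mul (by positivity), Real.sqrt_sq hX0]
    have h5 : Real.sqrt ((2:ℝ) ^ m) * Real.sqrt ((2:ℝ) ^ m) = 2 ^ m :=
      Real.mul_self_sqrt (by positivity)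
    calc Real.sqrt ((2:ℝ)^m) * Real.sqrt (∑ s : Fin m → Bool, Q s)
        ≤ Real.sqrt ((2:ℝ)^m) * (Real.sqrt ((2:ℝ) ^ m) * (Real.sqrt m * X)) := by
          rw [← h4]; exact mul_le_mul_of_nonneg_left h3 (Real.sqrt_nonneg _)
      _ = 2 ^ m * (Real.sqrt m * X) := by rw [← mul_assoc, h5]
  have hsm : Real.sqrt m / m ≤ Real.sqrt (2 / m) := by
    have h0 : (0:ℝ) ≤ Real.sqrt m / m := by positivity
    rw [Real.le_sqrt h0 (by positivity)]
    rw [div_pow, Real.sq_sqrt hm0.le, div_le_div_iff₀ (by positivity) hm0]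
    nlinarith [hm0]
  have hsum : ∑ s : Fin m → Bool,
      (⨆ f : ↥(NNclass n 1 c b), (1/(m:ℝ)) * ∑ i, sg (s i) * (f : (Fin n → ℝ) → ℝ) (x i))
      ≤ (1/(m:ℝ)) * (c * (2 ^ m * (Real.sqrt m * X)) + b * m * 2 ^ m) := by
    calc ∑ s : Fin m → Bool,
        (⨆ f : ↥(NNclass n 1 c b), (1/(m:ℝ)) * ∑ i, sg (s i) * (f : (Fin n → ℝ) → ℝ) (x i))
        ≤ ∑ s : Fin m → Bool, (1/(m:ℝ)) * (c * Real.sqrt (Q s) + b * m) :=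
          Finset.sum_le_sum fun s _ => hsup s
      _ = (1/(m:ℝ)) * (c * (∑ s : Fin m → Bool, Real.sqrt (Q s)) + b * m * 2 ^ m) := by
          rw [← Finset.mul_sum, Finset.sum_add_distrib, ← Finset.mul_sum, Finset.sum_const,
            card_signs]
          push_cast; ring
      _ ≤ (1/(m:ℝ)) * (c * (2 ^ m * (Real.sqrt m * X)) + b * m * 2 ^ m) := by
          refine mul_le_mul_of_nonneg_left
            (add_le_add_left (mul_le_mul_of_nonneg_left hsq hc) _) (by positivity)
  have h2m : ((2:ℝ) ^ m) ≠ 0 := by positivity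
  calc (1 / 2 ^ m : ℝ) * ∑ s : Fin m → Bool,
      ⨆ f : ↥(NNclass n 1 c b), (1/(m:ℝ)) * ∑ i, sg (s i) * (f : (Fin n → ℝ) → ℝ) (x i)
      ≤ (1 / 2 ^ m : ℝ) * ((1/(m:ℝ)) * (c * (2 ^ m * (Real.sqrt m * X)) + b * m * 2 ^ m)) :=
        mul_le_mul_of_nonneg_left hsum (by positivity)
    _ = c * (Real.sqrt m / m) * X + b := by
        field_simp
    _ ≤ c * Real.sqrt (2 / m) * X + b := by
        have := mul_le_mul_of_nonneg_right (mul_le_mul_of_nonneg_left hsm hc) hX0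
        linarith
end BaseTest

section StepTest
open RadAux

abbrev Params (n : ℕ) (c b : ℝ) :=
  {p : (ℕ → Matrix (Fin n) (Fin n) ℝ) × (ℕ → Fin n → ℝ) //
    (∀ l i, Real.sqrt (∑ j, p.1 l i j ^ 2) ≤ c) ∧ (∀ l i, |p.2 l i| ≤ b)}

lemma abs_relu_le (z : ℝ) : |max z 0| ≤ |z| := by
  rcases le_or_gt z 0 with h | h
  · rw [max_eq_right h]; simp
  · rw [max_eq_left h.le]

lemma swap_sum {m n : ℕ} (σ : Fin m → ℝ) (h : Fin m → Fin n → ℝ) (w : Fin n → ℝ) (β : ℝ) :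
    ∑ i, σ i * ((∑ j, w j * h i j) + β)
      = (∑ j, w j * (∑ i, σ i * h i j)) + β * (∑ i, σ i) := by
  calc ∑ i, σ i * ((∑ j, w j * h i j) + β)
      = ∑ i, ((∑ j, w j * (σ i * h i j)) + β * σ i) := by
        refine Finset.sum_congr rfl fun i _ => ?_
        rw [mul_add, Finset.mul_sum]
        congr 1
        · exact Finset.sum_congr rfl fun j _ => by ring
        · ring
    _ = (∑ i, ∑ j, w j * (σ i * h i j)) + β * ∑ i, σ i := by
        rw [Finset.sum_add_distrib, ← Finset.mul_sum]
    _ = (∑ j, w j * (∑ i, σ i * h i j)) + β * ∑ i, σ i := by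
        congr 1
        rw [Finset.sum_comm]
        exact Finset.sum_congr rfl fun j _ => by rw [Finset.mul_sum]

lemma step_case (n m e' : ℕ) (hn : 1 ≤ n) (hm : 1 ≤ m)
    (c b : ℝ) (hc : 0 ≤ c) (hb : 0 ≤ b) (x : Fin m → Fin n → ℝ) :
    rademacher x (NNclass n (e' + 1 + 1) c b) ≤
      2 * c * Real.sqrt n * rademacher x (NNclass n (e' + 1) c b) + b := by
  have hm0 : (0:ℝ) < m := by exact_mod_cast hm
  haveI : Nonempty (Fin n) := ⟨⟨0, hn⟩⟩
  set X := ⨆ i : Fin m, Real.sqrt (∑ j, x i j ^ 2) with hX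
  have hXi : ∀ i, Real.sqrt (∑ j, x i j ^ 2) ≤ X :=
    fun i => le_ciSup (f := fun i : Fin m => Real.sqrt (∑ j, x i j ^ 2))
      (Set.Finite.bddAbove (Set.finite_range _)) i
  have hX0 : 0 ≤ X := (Real.sqrt_nonneg _).trans (hXi ⟨0, hm⟩)
  obtain ⟨D, hD0, hDle⟩ := netHidden_bd (n := n) c b hc hb X hX0 e'
  set Cb := c * D + b with hCb
  have hCb0 : 0 ≤ Cb := by positivity
  haveI : Nonempty (Params n c b) :=
    ⟨⟨(0, 0), fun l i => by simp [hc], fun l i => by simp [hb]⟩⟩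
  haveI : Nonempty ↥(NNclass n (e' + 1 + 1) c b) := ⟨⟨_, zero_mem n _ c b hc hb⟩⟩
  haveI : Nonempty ↥(NNclass n (e' + 1) c b) := ⟨⟨_, zero_mem n _ c b hc hb⟩⟩
  -- the pre-activation family
  set a : (Params n c b × Fin n) → Fin m → ℝ := fun t i =>
    (∑ k, t.1.1.1 (e' + 1) t.2 k * netHidden t.1.1.1 t.1.1.2 e' (x i) k)
      + t.1.1.2 (e' + 1) t.2 with ha_def
  set φ : ℝ → ℝ := fun z => max z 0 with hφ_def
  have hφlip : ∀ z y : ℝ, |φ z - φ y| ≤ |z - y| := fun z y => abs_max_sub_max_le_abs z y 0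
  have ha_bd : ∀ t i, |a t i| ≤ Cb := by
    rintro ⟨⟨⟨W, B⟩, hW, hB⟩, j⟩ i
    show |(∑ k, W (e' + 1) j k * netHidden W B e' (x i) k) + B (e' + 1) j| ≤ Cb
    calc |(∑ k, W (e' + 1) j k * netHidden W B e' (x i) k) + B (e' + 1) j|
        ≤ |∑ k, W (e' + 1) j k * netHidden W B e' (x i) k| + |B (e' + 1) j| := abs_add_le _ _
      _ ≤ Real.sqrt (∑ k, W (e' + 1) j k ^ 2) *
            Real.sqrt (∑ k, netHidden W B e' (x i) k ^ 2) + b :=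
          add_le_add (abs_dot_le _ _) (hB _ _)
      _ ≤ c * D + b := add_le_add_left
          (mul_le_mul (hW _ _) (hDle W B hW hB (x i) (hXi i)) (Real.sqrt_nonneg _) hc) b
  have hφa_bd : ∀ t i, |φ (a t i)| ≤ Cb := fun t i => (abs_relu_le _).trans (ha_bd t i)
  -- |Σ_i sg * φ(a t i)| ≤ m * Cb  (for BddAbove)
  have hsum_bd : ∀ (s : Fin m → Bool) t, |∑ i, sg (s i) * φ (a t i)| ≤ (m:ℝ) * Cb := by
    intro s t
    calc |∑ i, sg (s i) * φ (a t i)| ≤ ∑ i, |sg (s i) * φ (a t i)| :=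
          Finset.abs_sum_le_sum_abs _ _
      _ ≤ ∑ _i : Fin m, Cb := Finset.sum_le_sum fun i _ => by
          rw [abs_mul, abs_sg, one_mul]; exact hφa_bd t i
      _ = (m:ℝ) * Cb := by simp [mul_comm]
  have bddM : ∀ s : Fin m → Bool,
      BddAbove (Set.range fun t : Params n c b × Fin n => |∑ i, sg (s i) * φ (a t i)|) :=
    fun s => bdd_range fun t => hsum_bd s t
  set Msup : (Fin m → Bool) → ℝ :=
    fun s => ⨆ t : Params n c b × Fin n, |∑ i, sg (s i) * φ (a t i)| with hMsup
  have hM0 : ∀ s, 0 ≤ Msup s := fun s =>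
    (abs_nonneg _).trans (le_ciSup (bddM s) Classical.ofNonempty)
  -- class bound for depth e'+1 members
  have class_bd : ∀ f ∈ NNclass n (e' + 1) c b, ∀ i, |f (x i)| ≤ Cb := by
    intro f hf i
    simp only [NNclass, Set.mem_setOf_eq] at hf
    obtain ⟨W, B, w, β, hW, hB, hw, hβ, hfx⟩ := hf
    have : f (x i) = (∑ j, w j * netHidden W B e' (x i) j) + β := by
      simpa using hfx (x i)
    rw [this]
    calc |(∑ j, w j * netHidden W B e' (x i) j) + β|
        ≤ |∑ j, w j * netHidden W B e' (x i) j| + |β| := abs_add_le _ _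
      _ ≤ Real.sqrt (∑ j, w j ^ 2) * Real.sqrt (∑ j, netHidden W B e' (x i) j ^ 2) + b :=
          add_le_add (abs_dot_le _ _) hβ
      _ ≤ c * D + b := add_le_add_left
          (mul_le_mul hw (hDle W B hW hB (x i) (hXi i)) (Real.sqrt_nonneg _) hc) b
  have bddS : ∀ s : Fin m → Bool,
      BddAbove (Set.range fun f : ↥(NNclass n (e' + 1) c b) =>
        ∑ i, sg (s i) * (f : (Fin n → ℝ) → ℝ) (x i)) := by
    intro s
    refine bdd_range (C := (m:ℝ) * Cb) fun f => ?_
    calc ∑ i, sg (s i) * (f : (Fin n → ℝ) → ℝ) (x i)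
        ≤ ∑ i, |sg (s i) * (f : (Fin n → ℝ) → ℝ) (x i)| :=
          Finset.sum_le_sum fun i _ => le_abs_self _
      _ ≤ ∑ _i : Fin m, Cb := Finset.sum_le_sum fun i _ => by
          rw [abs_mul, abs_sg, one_mul]; exact class_bd f f.2 i
      _ = (m:ℝ) * Cb := by simp [mul_comm]
  set Ssup : (Fin m → Bool) → ℝ :=
    fun s => ⨆ f : ↥(NNclass n (e' + 1) c b), ∑ i, sg (s i) * (f : (Fin n → ℝ) → ℝ) (x i)
    with hSsup
  -- per sign-vector bound for depth e'+2
  have claim1 : ∀ s : Fin m → Bool,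
      (⨆ f : ↥(NNclass n (e' + 1 + 1) c b),
        (1/(m:ℝ)) * ∑ i, sg (s i) * (f : (Fin n → ℝ) → ℝ) (x i))
      ≤ (1/(m:ℝ)) * (c * (Real.sqrt n * Msup s) + b * m) := by
    intro s
    refine ciSup_le ?_
    rintro ⟨f, hf⟩
    simp only [NNclass, Set.mem_setOf_eq] at hf
    obtain ⟨W, B, w, β, hW, hB, hw, hβ, hfx⟩ := hf
    have hfv : ∀ i, f (x i) = (∑ j, w j * netHidden W B (e' + 1) (x i) j) + β := by
      intro i; simpa using hfx (x i)
    have hswap : ∑ i, sg (s i) * f (x i)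
        = (∑ j, w j * (∑ i, sg (s i) * netHidden W B (e' + 1) (x i) j))
          + β * (∑ i, sg (s i)) := by
      rw [show (fun i => sg (s i) * f (x i)) = fun i =>
        sg (s i) * ((∑ j, w j * netHidden W B (e' + 1) (x i) j) + β) by
          funext i; rw [hfv i]]
      exact swap_sum _ _ _ _
    -- each coordinate of u is a signed sum of φ∘a for suitable parameter
    have hu : ∀ j : Fin n, |∑ i, sg (s i) * netHidden W B (e' + 1) (x i) j| ≤ Msup s := by
      intro j
      have hrep : ∀ i, netHidden W B (e' + 1) (x i) j = φ (a (⟨(W, B), hW, hB⟩, j) i) := by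
        intro i
        show max (((W (e' + 1)).mulVec (netHidden W B e' (x i)) + B (e' + 1)) j) 0 = φ _
        simp [hφ_def, ha_def, Matrix.mulVec, dotProduct]
      rw [show (∑ i, sg (s i) * netHidden W B (e' + 1) (x i) j)
          = ∑ i, sg (s i) * φ (a (⟨(W, B), hW, hB⟩, j) i) from
        Finset.sum_congr rfl fun i _ => by rw [hrep i]]
      exact le_ciSup (bddM s) (⟨(W, B), hW, hB⟩, j)
    have hbd : ∑ i, sg (s i) * f (x i) ≤ c * (Real.sqrt n * Msup s) + b * m := by
      rw [hswap]
      have h1 : |∑ j, w j * (∑ i, sg (s i) * netHidden W B (e' + 1) (x i) j)|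
          ≤ c * (Real.sqrt n * Msup s) := by
        refine (abs_dot_le w _).trans ?_
        refine mul_le_mul hw ?_ (Real.sqrt_nonneg _) hc
        exact sqrt_sum_le_of_bound _ _ (hM0 s) hu
      have h2 : |β * ∑ i, sg (s i)| ≤ b * m := by
        rw [abs_mul]
        refine mul_le_mul hβ ?_ (abs_nonneg _) hb
        calc |∑ i, sg (s i)| ≤ ∑ i, |sg (s i)| := Finset.abs_sum_le_sum_abs _ _
          _ = m := by simp [abs_sg]
      calc _ ≤ |∑ j, w j * (∑ i, sg (s i) * netHidden W B (e' + 1) (x i) j)|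
            + |β * (∑ i, sg (s i))| := add_le_add (le_abs_self _) (le_abs_self _)
        _ ≤ c * (Real.sqrt n * Msup s) + b * m := add_le_add h1 h2
    exact mul_le_mul_of_nonneg_left hbd (by positivity)
  -- symmetrization + contraction + inclusion into the depth-(e'+1) class
  have claim2 : ∑ s : Fin m → Bool, Msup s ≤ 2 * ∑ s : Fin m → Bool, Ssup s := by
    set t₀ : Params n c b × Fin n :=
      (⟨(0, 0), fun l i => by simp [hc], fun l i => by simp [hb]⟩, ⟨0, hn⟩) with ht₀
    have h0 : ∀ i, φ (a t₀ i) = 0 := by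
      intro i
      simp [ht₀, ha_def, hφ_def]
    have hsym := symmetrization (fun t => fun i => φ (a t i)) Cb
      (fun t i => hφa_bd t i) t₀ h0
    have hcon := contraction a φ hφlip Cb hCb0 ha_bd hφa_bd
    have hinc : ∑ s : Fin m → Bool,
        (⨆ t : Params n c b × Fin n, ∑ i, sg (s i) * a t i)
        ≤ ∑ s : Fin m → Bool, Ssup s := by
      refine Finset.sum_le_sum fun s _ => ?_
      refine ciSup_le ?_
      rintro ⟨⟨⟨W, B⟩, hW, hB⟩, j⟩
      have hg : (fun y => (∑ k, W (e' + 1) j k * netHidden W B e' y k) + B (e' + 1) j)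
          ∈ NNclass n (e' + 1) c b := by
        refine ⟨W, B, fun k => W (e' + 1) j k, B (e' + 1) j, hW, hB, hW _ _, hB _ _, ?_⟩
        intro y; simp
      have := le_ciSup (bddS s)
        (⟨_, hg⟩ : ↥(NNclass n (e' + 1) c b))
      exact this
    calc ∑ s : Fin m → Bool, Msup s
        ≤ 2 * ∑ s : Fin m → Bool, ⨆ t, ∑ i, sg (s i) * φ (a t i) := hsym
      _ ≤ 2 * ∑ s : Fin m → Bool, ⨆ t, ∑ i, sg (s i) * a t i := by linarith [hcon]
      _ ≤ 2 * ∑ s : Fin m → Bool, Ssup s := by linarith [hinc]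
  -- pull out the 1/m factor in the depth-(e'+1) Rademacher complexity
  have hrad_e : rademacher x (NNclass n (e' + 1) c b)
      = (1 / 2 ^ m : ℝ) * ((1/(m:ℝ)) * ∑ s : Fin m → Bool, Ssup s) := by
    rw [rademacher_eq]
    congr 1
    rw [Finset.mul_sum]
    refine Finset.sum_congr rfl fun s _ => ?_
    rw [hSsup]
    exact (Real.mul_iSup_of_nonneg (by positivity) _).symm
  -- assemble
  rw [rademacher_eq]
  have hsum1 : ∑ s : Fin m → Bool,
      (⨆ f : ↥(NNclass n (e' + 1 + 1) c b),
        (1/(m:ℝ)) * ∑ i, sg (s i) * (f : (Fin n → ℝ) → ℝ) (x i))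
      ≤ (1/(m:ℝ)) * (c * (Real.sqrt n * (2 * ∑ s : Fin m → Bool, Ssup s)) + b * m * 2 ^ m) := by
    calc ∑ s : Fin m → Bool,
        (⨆ f : ↥(NNclass n (e' + 1 + 1) c b),
          (1/(m:ℝ)) * ∑ i, sg (s i) * (f : (Fin n → ℝ) → ℝ) (x i))
        ≤ ∑ s : Fin m → Bool, (1/(m:ℝ)) * (c * (Real.sqrt n * Msup s) + b * m) :=
          Finset.sum_le_sum fun s _ => claim1 s
      _ = (1/(m:ℝ)) * (c * (Real.sqrt n * ∑ s : Fin m → Bool, Msup s) + b * m * 2 ^ m) := by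
          rw [← Finset.mul_sum, Finset.sum_add_distrib, Finset.sum_const, card_signs]
          congr 2
          · rw [← Finset.mul_sum, ← Finset.mul_sum]
          · push_cast; ring
      _ ≤ (1/(m:ℝ)) * (c * (Real.sqrt n * (2 * ∑ s : Fin m → Bool, Ssup s)) + b * m * 2 ^ m) := by
          have h := claim2
          have : Real.sqrt n * ∑ s : Fin m → Bool, Msup s
              ≤ Real.sqrt n * (2 * ∑ s : Fin m → Bool, Ssup s) :=
            mul_le_mul_of_nonneg_left h (Real.sqrt_nonneg _)
          refine mul_le_mul_of_nonneg_left (add_le_add_left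
            (mul_le_mul_of_nonneg_left this hc) _) (by positivity)
  calc (1 / 2 ^ m : ℝ) * ∑ s : Fin m → Bool,
      ⨆ f : ↥(NNclass n (e' + 1 + 1) c b),
        (1/(m:ℝ)) * ∑ i, sg (s i) * (f : (Fin n → ℝ) → ℝ) (x i)
      ≤ (1 / 2 ^ m : ℝ) * ((1/(m:ℝ)) *
          (c * (Real.sqrt n * (2 * ∑ s : Fin m → Bool, Ssup s)) + b * m * 2 ^ m)) :=
        mul_le_mul_of_nonneg_left hsum1 (by positivity)
    _ = 2 * c * Real.sqrt n *
          ((1 / 2 ^ m : ℝ) * ((1/(m:ℝ)) * ∑ s : Fin m → Bool, Ssup s)) + b := by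
        field_simp
    _ = 2 * c * Real.sqrt n * rademacher x (NNclass n (e' + 1) c b) + b := by
        rw [hrad_e]
end StepTest

/-- Upper bound for the Rademacher complexity of depth-`d`, width-`n` ReLU
networks with `L_{2,∞}`-normalized weight matrices and bounded biases:
`R(N^{d,n}_{c,b}) ≤ (2c√n)^{d−1} c √(2/m) max_i ‖x_i‖₂ + b Σ_{j=0}^{d−1} (2c√n)^j`. -/
theorem rademacher_deep_relu_le (n m d : ℕ) (hn : 1 ≤ n) (hm : 1 ≤ m) (hd : 1 ≤ d)
    (c b : ℝ) (hc : 0 ≤ c) (hb : 0 ≤ b) (x : Fin m → Fin n → ℝ) :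
    rademacher x (NNclass n d c b) ≤
      (2 * c * Real.sqrt n) ^ (d - 1) * c * Real.sqrt (2 / m) *
          (⨆ i : Fin m, Real.sqrt (∑ j, x i j ^ 2)) +
        b * ∑ j ∈ Finset.range d, (2 * c * Real.sqrt n) ^ j := by
  obtain ⟨e, rfl⟩ : ∃ e, d = e + 1 := ⟨d - 1, (Nat.succ_pred_eq_of_pos hd).symm⟩
  clear hd
  set X := ⨆ i : Fin m, Real.sqrt (∑ j, x i j ^ 2) with hX
  set r := 2 * c * Real.sqrt n with hr
  have hr0 : 0 ≤ r := by positivity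
  induction e with
  | zero =>
      have h := base_case n m hn hm c b hc hb x
      simpa [← hX] using h
  | succ e' ih =>
      have hstep := step_case n m e' hn hm c b hc hb x
      rw [← hr] at hstep
      simp only [Nat.add_sub_cancel] at ih ⊢
      refine hstep.trans ?_
      have h2 := mul_le_mul_of_nonneg_left ih hr0
      have expand : r * (r ^ e' * c * Real.sqrt (2 / m) * X
            + b * ∑ j ∈ Finset.range (e' + 1), r ^ j) + b
          = r ^ (e' + 1) * c * Real.sqrt (2 / m) * X
            + b * ∑ j ∈ Finset.range (e' + 1 + 1), r ^ j := by
        conv_rhs => rw [geom_sum_succ]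
        ring
      linarith
end
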